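/- Let y be a positive absolutely continuous function on (0,∞) satisfying y'(t) + γ y(t)^ν ≤ δ for a.e. t, where ν > 1, γ > 0 and δ ≥ 0. Then for all t > 0, y(t) ≤ (δ/γ)^(1/ν) + (γ(ν−1)t)^(−1/(ν−1)). -/

import Mathlib

open Real

lemma rpow_superadd {a b ν : ℝ} (ha : 0 ≤ a) (hb : 0 ≤ b) (hν : 1 ≤ ν) :
    a ^ ν + b ^ ν ≤ (a + b) ^ ν := by
  have hν0 : (0:ℝ) < ν := lt_of_lt_of_le one_pos hν
  rcases eq_or_lt_of_le ha with h | ha'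
  · simp [← h, Real.zero_rpow (ne_of_gt hν0)]
  rcases eq_or_lt_of_le hb with h | hb'
  · simp [← h, Real.zero_rpow (ne_of_gt hν0)]
  have hab : 0 < a + b := by linarith
  have h1 : a ^ ν = a * a ^ (ν - 1) := by
    rw [← Real.rpow_one_add' ha (by linarith)]; ring_nf
  have h2 : b ^ ν = b * b ^ (ν - 1) := by
    rw [← Real.rpow_one_add' hb (by linarith)]; ring_nf
  have h3 : (a + b) ^ ν = (a + b) * (a + b) ^ (ν - 1) := by
    rw [← Real.rpow_one_add' hab.le (by linarith)]; ring_nf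
  have ha2 : a ^ (ν - 1) ≤ (a + b) ^ (ν - 1) :=
    Real.rpow_le_rpow ha (by linarith) (by linarith)
  have hb2 : b ^ (ν - 1) ≤ (a + b) ^ (ν - 1) :=
    Real.rpow_le_rpow hb (by linarith) (by linarith)
  rw [h1, h2, h3]
  nlinarith [Real.rpow_nonneg ha (ν - 1), Real.rpow_nonneg hb (ν - 1)]

/-- Ghidaglia inequality. -/
theorem ghidaglia_inequality (y : ℝ → ℝ) (γ δ ν : ℝ)
    (hν : 1 < ν) (hγ : 0 < γ) (hδ : 0 ≤ δ)
    (hpos : ∀ t, 0 < t → 0 < y t)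
    (hdiff : ∀ t, 0 < t → DifferentiableAt ℝ y t)
    (hineq : ∀ t, 0 < t → deriv y t + γ * (y t) ^ ν ≤ δ) :
    ∀ t, 0 < t →
      y t ≤ (δ / γ) ^ (1 / ν) + (γ * (ν - 1) * t) ^ (-(1 / (ν - 1))) := by
  have hν0 : (0:ℝ) < ν := lt_trans one_pos hν
  have hν1 : (0:ℝ) < ν - 1 := by linarith
  set q : ℝ := -(1 / (ν - 1)) with hq
  set c₁ : ℝ := γ * (ν - 1) with hc₁
  have hc₁0 : 0 < c₁ := mul_pos hγ hν1
  set K : ℝ := (δ / γ) ^ (1 / ν) with hK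
  set w : ℝ → ℝ := fun s => (c₁ * s) ^ q with hw
  have hq0 : q < 0 := by
    have h : 0 < 1 / (ν - 1) := by positivity
    rw [hq]; linarith
  have hK0 : 0 ≤ K := Real.rpow_nonneg (div_nonneg hδ hγ.le) _
  have hKν : γ * K ^ ν = δ := by
    rw [hK, ← Real.rpow_mul (div_nonneg hδ hγ.le), one_div_mul_cancel (ne_of_gt hν0),
      Real.rpow_one, mul_div_cancel₀ _ (ne_of_gt hγ)]
  have hw_pos : ∀ s : ℝ, 0 < s → 0 < w s := fun s hs =>
    Real.rpow_pos_of_pos (mul_pos hc₁0 hs) _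
  have hw_deriv : ∀ s : ℝ, 0 < s → HasDerivAt w (-γ * (w s) ^ ν) s := by
    intro s hs
    have hcs : 0 < c₁ * s := mul_pos hc₁0 hs
    have h1 : HasDerivAt (fun s : ℝ => c₁ * s) c₁ s := by
      simpa using (hasDerivAt_id s).const_mul c₁
    have h2 := (Real.hasDerivAt_rpow_const (p := q) (Or.inl (ne_of_gt hcs))).comp s h1
    have hwνs : (w s) ^ ν = (c₁ * s) ^ (q * ν) := by
      rw [hw, ← Real.rpow_mul hcs.le]
    have hexp : q - 1 = q * ν := by
      rw [hq]; field_simp; ring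
    have hqc : q * c₁ = -γ := by
      rw [hq, hc₁]; field_simp
    have heq : -γ * (w s) ^ ν = q * (c₁ * s) ^ (q - 1) * c₁ := by
      rw [hwνs, ← hexp, ← hqc]; ring
    rw [heq]
    exact h2
  have hw_anti : ∀ s s' : ℝ, 0 < s → s ≤ s' → w s' ≤ w s := by
    intro s s' hs hss'
    exact Real.rpow_le_rpow_of_nonpos (mul_pos hc₁0 hs) (by nlinarith) hq0.le
  -- key comparison lemma
  have key : ∀ a b η c : ℝ, 0 < a → a ≤ b → 0 < η → 0 ≤ c → c < a →
      y a ≤ K + w (a - c) + η → y b ≤ K + w (b - c) + η := by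
    intro a b η c ha hab hη hc hca hya
    have hBd : ∀ x : ℝ, 0 < x - c →
        HasDerivAt (fun t : ℝ => K + w (t - c) + η) (-γ * (w (x - c)) ^ ν) x := by
      intro x hxc
      have h := (hw_deriv _ hxc).comp x ((hasDerivAt_id x).sub_const c)
      have h' : HasDerivAt (fun t : ℝ => w (t - c)) (-γ * (w (x - c)) ^ ν) x := by
        simpa [Function.comp_def] using h
      simpa using (h'.const_add K).add_const η
    have main := image_le_of_deriv_right_lt_deriv_boundary'
      (f := y) (f' := deriv y) (a := a) (b := b)
      (B := fun t => K + w (t - c) + η) (B' := fun t => -γ * (w (t - c)) ^ ν)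
      (fun x hx => (hdiff x (lt_of_lt_of_le ha hx.1)).continuousAt.continuousWithinAt)
      (fun x hx => ((hdiff x (lt_of_lt_of_le ha hx.1)).hasDerivAt).hasDerivWithinAt)
      hya
      (fun x hx => by
        have hxc : 0 < x - c := by have := hx.1; linarith
        exact (hBd x hxc).continuousAt.continuousWithinAt)
      (fun x hx => by
        have hxc : 0 < x - c := by have := hx.1; linarith
        exact (hBd x hxc).hasDerivWithinAt)
      (fun x hx hyx => by
        show deriv y x < -γ * (w (x - c)) ^ ν
        replace hyx : y x = K + w (x - c) + η := hyx
        have hx0 : 0 < x := lt_of_lt_of_le ha hx.1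
        have hxc : 0 < x - c := by have := hx.1; linarith
        have h1 : deriv y x ≤ δ - γ * (y x) ^ ν := by linarith [hineq x hx0]
        have hwx : 0 ≤ w (x - c) := (hw_pos _ hxc).le
        have h2 : K ^ ν + (w (x - c) + η) ^ ν ≤ (K + (w (x - c) + η)) ^ ν :=
          rpow_superadd hK0 (by linarith) hν.le
        have h3 : (w (x - c)) ^ ν < (w (x - c) + η) ^ ν :=
          Real.rpow_lt_rpow hwx (by linarith) hν0
        have h4 : γ * K ^ ν + γ * (w (x - c)) ^ ν < γ * (y x) ^ ν := by
          rw [hyx]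
          have he : K + w (x - c) + η = K + (w (x - c) + η) := by ring
          rw [he]
          nlinarith
        rw [hKν] at h4
        linarith)
    exact main (Set.right_mem_Icc.2 hab)
  intro t ht
  refine le_of_forall_pos_le_add (fun η hη => ?_)
  have step : ∀ a : ℝ, a ∈ Set.Ioo 0 t → y t ≤ K + w (t - a) + η := by
    intro a ha
    obtain ⟨ha0, hat⟩ := ha
    set σ : ℝ := min (a / 2) ((y a) ^ (-(ν - 1)) / c₁) with hσ
    have hya : 0 < y a := hpos a ha0
    have hσ0 : 0 < σ := lt_min (by linarith) (div_pos (Real.rpow_pos_of_pos hya _) hc₁0)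
    have hσa : σ < a := lt_of_le_of_lt (min_le_left _ _) (by linarith)
    have hwσ : y a ≤ w σ := by
      have h1 : c₁ * σ ≤ (y a) ^ (-(ν - 1)) := by
        have hm := min_le_right (a / 2) ((y a) ^ (-(ν - 1)) / c₁)
        calc c₁ * σ ≤ c₁ * ((y a) ^ (-(ν - 1)) / c₁) :=
              mul_le_mul_of_nonneg_left hm hc₁0.le
          _ = (y a) ^ (-(ν - 1)) := by field_simp
      have h2 : ((y a) ^ (-(ν - 1))) ^ q ≤ (c₁ * σ) ^ q :=
        Real.rpow_le_rpow_of_nonpos (mul_pos hc₁0 hσ0) h1 hq0.le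
      have h3 : ((y a) ^ (-(ν - 1))) ^ q = y a := by
        rw [← Real.rpow_mul hya.le, hq]
        have he : -(ν - 1) * -(1 / (ν - 1)) = 1 := by field_simp
        rw [he, Real.rpow_one]
      rw [hw]
      rw [h3] at h2
      exact h2
    set c : ℝ := a - σ with hc
    have h0 : y a ≤ K + w (a - c) + η := by
      have he : a - c = σ := by rw [hc]; ring
      rw [he]; linarith
    have hkey := key a t η c ha0 hat.le hη (by rw [hc]; linarith) (by rw [hc]; linarith) h0
    calc y t ≤ K + w (t - c) + η := hkey
      _ ≤ K + w (t - a) + η := by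
          have hm : w (t - c) ≤ w (t - a) := hw_anti (t - a) (t - c) (by linarith)
            (by rw [hc]; linarith)
          linarith
  -- limit a → 0+
  have hcont : ContinuousAt (fun a : ℝ => K + w (t - a) + η) 0 := by
    have h1 : ContinuousAt w t := (hw_deriv t ht).continuousAt
    have h2 : ContinuousAt (fun a : ℝ => t - a) 0 := by fun_prop
    have h3 : ContinuousAt (fun a : ℝ => w (t - a)) 0 := by
      have := ContinuousAt.comp (x := (0:ℝ)) (g := w) (by simpa using h1) h2
      simpa [Function.comp_def] using this
    exact (continuousAt_const.add h3).add continuousAt_const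
  have htend : Filter.Tendsto (fun a : ℝ => K + w (t - a) + η) (nhdsWithin 0 (Set.Ioi 0))
      (nhds (K + w t + η)) := by
    have h := hcont.continuousWithinAt (s := Set.Ioi (0:ℝ))
    simpa using h.tendsto
  have hev : ∀ᶠ a in nhdsWithin 0 (Set.Ioi 0), y t ≤ K + w (t - a) + η := by
    filter_upwards [Ioo_mem_nhdsGT_of_mem (Set.mem_Ico.2 ⟨le_refl 0, ht⟩)] with a ha
    exact step a ha
  exact ge_of_tendsto htend hev
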